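/- Let m ≥ 0 be an integer. Define β(a,i) for integers a ≥ 1 and 1 ≤ i ≤ m+1 recursively by β(1,i) = C(m+1, i), and for a ≥ 2, β(a,i) = Σ_{l=1}^{a-1} (-1)^{l+1} C(m+1, l) β(a-l, i) + (-1)^{a-1} C(m+1, i+a-1). Then β(a,i) = C(i+a-2, a-1) · C(m+a, i+a-1) for all a ≥ 1 and 1 ≤ i ≤ m+1. -/

import Mathlib

/-- Integer binomial coefficient: the polynomial `C(x, k)` evaluated at any integer `x`. -/
def ibin (x : ℤ) (k : ℕ) : ℤ :=
  if 0 ≤ x then (x.toNat.choose k : ℤ) else (-1) ^ k * (((-x).toNat + k - 1).choose k : ℤ)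

lemma ibin_zero (x : ℤ) : ibin x 0 = 1 := by
  unfold ibin; split <;> simp

lemma ibin_natCast (n : ℕ) (k : ℕ) : ibin (n : ℤ) k = (n.choose k : ℤ) := by
  simp [ibin]

lemma ibin_neg (n k : ℕ) : ibin (-((n : ℤ) + 1)) k = (-1) ^ k * ((n + k).choose k : ℤ) := by
  have h : ¬ (0 : ℤ) ≤ -((n : ℤ) + 1) := by omega
  rw [ibin, if_neg h, neg_neg]
  have h2 : ((n : ℤ) + 1).toNat = n + 1 := by omega
  rw [h2]
  have e : n + 1 + k - 1 = n + k := by omega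
  rw [e]

lemma ibin_pascal (x : ℤ) (k : ℕ) : ibin (x + 1) (k + 1) = ibin x (k + 1) + ibin x k := by
  rcases x with n | n
  · simp only [Int.ofNat_eq_natCast]
    have : ((n : ℤ) + 1) = ((n + 1 : ℕ) : ℤ) := by push_cast; ring
    rw [this, ibin_natCast, ibin_natCast, ibin_natCast]
    have h := Nat.choose_succ_succ n k
    simp only [Nat.succ_eq_add_one] at h
    push_cast [h]
    ring
  · rcases n with _ | s
    · have h1 : (Int.negSucc 0) + 1 = ((0 : ℕ) : ℤ) := by decide
      have h2 : (Int.negSucc 0) = -(((0 : ℕ) : ℤ) + 1) := by decide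
      rw [h1, h2, ibin_natCast, ibin_neg, ibin_neg]
      simp [Nat.choose_succ_self, pow_succ]
    · have h1 : (Int.negSucc (s + 1)) + 1 = -(((s : ℕ) : ℤ) + 1) := by
        rw [Int.negSucc_eq]; push_cast; try ring
      have h2 : (Int.negSucc (s + 1)) = -(((s + 1 : ℕ) : ℤ) + 1) := by
        rw [Int.negSucc_eq]
      rw [h1, h2, ibin_neg, ibin_neg, ibin_neg]
      have e1 : s + 1 + (k + 1) = s + (k + 1) + 1 := by omega
      have e2 : s + 1 + k = s + (k + 1) := by omega
      rw [e1, e2, Nat.choose_succ_succ (s + (k + 1)) k]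
      push_cast
      ring
lemma fwdDiff_ibin (c : ℤ) (k : ℕ) :
    fwdDiff (1 : ℤ) (fun t => ibin (t + c) (k + 1)) = fun t => ibin (t + c) k := by
  funext t
  show ibin (t + 1 + c) (k + 1) - ibin (t + c) (k + 1) = ibin (t + c) k
  rw [show t + 1 + c = (t + c) + 1 by ring, ibin_pascal (t + c) k]
  ring

lemma fwdDiff_iter_zero (j : ℕ) : (fwdDiff (1 : ℤ))^[j] (0 : ℤ → ℤ) = 0 := by
  induction j with
  | zero => rfl
  | succ j ih =>
    rw [Function.iterate_succ_apply]
    have : fwdDiff (1 : ℤ) (0 : ℤ → ℤ) = 0 := by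
      funext t; show (0 : ℤ) - 0 = 0; ring
    rw [this, ih]

lemma fwdDiff_iter_ibin (c : ℤ) (k : ℕ) :
    (fwdDiff (1 : ℤ))^[k + 1] (fun t => ibin (t + c) k) = 0 := by
  induction k with
  | zero =>
    funext t
    show fwdDiff (1 : ℤ) (fun t => ibin (t + c) 0) t = 0
    show ibin (t + 1 + c) 0 - ibin (t + c) 0 = 0
    rw [ibin_zero, ibin_zero]; ring
  | succ k ih =>
    rw [Function.iterate_succ_apply, fwdDiff_ibin, ih]

lemma fwdDiff_iter_shift (v : ℤ → ℤ) (j : ℕ) :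
    (fwdDiff (1 : ℤ))^[j] (fun t => v (t + 1)) = fun t => ((fwdDiff (1 : ℤ))^[j] v) (t + 1) := by
  induction j with
  | zero => rfl
  | succ j ih =>
    rw [Function.iterate_succ_apply', ih, Function.iterate_succ_apply']
    rfl

lemma fwdDiff_mul (u v : ℤ → ℤ) :
    fwdDiff (1 : ℤ) (u * v) = (fwdDiff (1 : ℤ) u) * (fun t => v (t + 1)) + u * (fwdDiff (1 : ℤ) v) := by
  funext t
  show u (t + 1) * v (t + 1) - u t * v t
      = (u (t + 1) - u t) * v (t + 1) + u t * (v (t + 1) - v t)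
  ring

lemma fwdDiff_iter_mul_eq_zero :
    ∀ (n p q : ℕ) (u v : ℤ → ℤ), p + q = n →
      (fwdDiff (1 : ℤ))^[p + 1] u = 0 → (fwdDiff (1 : ℤ))^[q + 1] v = 0 →
      (fwdDiff (1 : ℤ))^[n + 1] (u * v) = 0 := by
  intro n
  induction n with
  | zero =>
    intro p q u v hpq hu hv
    have hp : p = 0 := by omega
    have hq : q = 0 := by omega
    subst hp; subst hq
    rw [Function.iterate_one] at hu hv ⊢
    rw [fwdDiff_mul, hu, hv]
    funext t
    show (0 : ℤ) * v (t + 1) + u t * 0 = 0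
    ring
  | succ n ih =>
    intro p q u v hpq hu hv
    rw [Function.iterate_succ_apply, fwdDiff_mul, fwdDiff_iter_add]
    have term1 : (fwdDiff (1 : ℤ))^[n + 1] ((fwdDiff (1 : ℤ) u) * (fun t => v (t + 1))) = 0 := by
      rcases p with _ | p'
      · rw [Function.iterate_one] at hu
        rw [hu]
        have : (0 : ℤ → ℤ) * (fun t => v (t + 1)) = 0 := by funext t; exact zero_mul _
        rw [this, fwdDiff_iter_zero]
      · have hu' : (fwdDiff (1 : ℤ))^[p' + 1] (fwdDiff (1 : ℤ) u) = 0 := by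
          rw [← Function.iterate_succ_apply]; exact hu
        have hv' : (fwdDiff (1 : ℤ))^[q + 1] (fun t => v (t + 1)) = 0 := by
          rw [fwdDiff_iter_shift, hv]; rfl
        exact ih p' q _ _ (by omega) hu' hv'
    have term2 : (fwdDiff (1 : ℤ))^[n + 1] (u * (fwdDiff (1 : ℤ) v)) = 0 := by
      rcases q with _ | q'
      · rw [Function.iterate_one] at hv
        rw [hv]
        have : u * (0 : ℤ → ℤ) = 0 := by funext t; exact mul_zero _
        rw [this, fwdDiff_iter_zero]
      · have hv' : (fwdDiff (1 : ℤ))^[q' + 1] (fwdDiff (1 : ℤ) v) = 0 := by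
          rw [← Function.iterate_succ_apply]; exact hv
        exact ih p q' _ _ (by omega) hu hv'
    rw [term1, term2, add_zero]
lemma sum_alt (m : ℕ) (f : ℤ → ℤ) (hf : (fwdDiff (1 : ℤ))^[m + 1] f = 0) (x : ℤ) :
    ∑ l ∈ Finset.range (m + 2), (-1 : ℤ) ^ l * (((m + 1).choose l : ℕ) : ℤ) * f (x - l) = 0 := by
  have h0 := fwdDiff_iter_eq_sum_shift (1 : ℤ) f (m + 1) (x - (m + 1))
  rw [hf] at h0
  simp only [Pi.zero_apply] at h0
  rw [← Finset.sum_range_reflect]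
  rw [show m + 2 - 1 = m + 1 from rfl]
  have : ∀ j ∈ Finset.range (m + 2),
      (-1 : ℤ) ^ (m + 1 - j) * (((m + 1).choose (m + 1 - j) : ℕ) : ℤ) * f (x - ((m + 1 - j : ℕ) : ℤ))
      = ((-1 : ℤ) ^ (m + 1 - j) * ((m + 1).choose j : ℕ)) • f (x - (m + 1) + j • (1 : ℤ)) := by
    intro j hj
    rw [Finset.mem_range] at hj
    have hjle : j ≤ m + 1 := by omega
    have hc : (m + 1).choose (m + 1 - j) = (m + 1).choose j := Nat.choose_symm hjle
    have harg : x - ((m + 1 - j : ℕ) : ℤ) = x - (m + 1) + j • (1 : ℤ) := by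
      have : ((m + 1 - j : ℕ) : ℤ) = (m + 1 : ℤ) - j := by omega
      rw [this, nsmul_eq_mul, mul_one]
      try ring
    rw [hc, harg, smul_eq_mul]
    try ring
  rw [Finset.sum_congr rfl this, ← h0]
lemma F_nat (m i b : ℕ) (hi1 : 1 ≤ i) (hi2 : i ≤ m + 1) (hb : 1 ≤ b) :
    ibin ((b : ℤ) + ((i : ℤ) - 2)) (i - 1) * ibin ((b : ℤ) + (m : ℤ)) (m + 1 - i)
      = ((i + b - 2).choose (b - 1) : ℤ) * ((m + b).choose (i + b - 1) : ℤ) := by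
  have e1 : (b : ℤ) + ((i : ℤ) - 2) = ((i + b - 2 : ℕ) : ℤ) := by omega
  have e2 : (b : ℤ) + (m : ℤ) = ((m + b : ℕ) : ℤ) := by omega
  rw [e1, e2, ibin_natCast, ibin_natCast]
  have c1 : (i + b - 2).choose (i - 1) = (i + b - 2).choose (b - 1) := by
    rw [← Nat.choose_symm (show i - 1 ≤ i + b - 2 by omega)]
    congr 1
    omega
  have c2 : (m + b).choose (m + 1 - i) = (m + b).choose (i + b - 1) := by
    rw [← Nat.choose_symm (show i + b - 1 ≤ m + b by omega)]
    congr 1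
    omega
  rw [c1, c2]

lemma F_neg (m i s : ℕ) (hi1 : 1 ≤ i) (hi2 : i ≤ m + 1) (hs : s ≤ m) :
    ibin (-(s : ℤ) + ((i : ℤ) - 2)) (i - 1) * ibin (-(s : ℤ) + (m : ℤ)) (m + 1 - i)
      = (-1) ^ (i - 1) * (s.choose (i - 1) : ℤ) * ((m - s).choose (m + 1 - i) : ℤ) := by
  have e2 : -(s : ℤ) + (m : ℤ) = ((m - s : ℕ) : ℤ) := by omega
  rw [e2, ibin_natCast]
  rcases le_or_gt (i - 1) s with hcase | hcase
  · have e1 : -(s : ℤ) + ((i : ℤ) - 2) = -(((s + 1 - i : ℕ) : ℤ) + 1) := by omega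
    rw [e1, ibin_neg, show s + 1 - i + (i - 1) = s by omega]
    try ring
  · have e1 : -(s : ℤ) + ((i : ℤ) - 2) = ((i - 2 - s : ℕ) : ℤ) := by omega
    rw [e1, ibin_natCast, Nat.choose_eq_zero_of_lt (show i - 2 - s < i - 1 by omega),
        Nat.choose_eq_zero_of_lt (show s < i - 1 by omega)]
    simp
lemma sign_helper (i a : ℕ) (hi : 1 ≤ i) (ha : 1 ≤ a) :
    (-1 : ℤ) ^ (i + a - 1 + 1) * (-1) ^ (i - 1) = (-1) ^ (a - 1) := by
  rw [← pow_add, show i + a - 1 + 1 + (i - 1) = 2 * (i - 1) + 2 + (a - 1) by omega,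
    pow_add, pow_add, pow_mul]
  norm_num

lemma g_rec (m i a : ℕ) (hi1 : 1 ≤ i) (hi2 : i ≤ m + 1) (ha : 2 ≤ a) :
    ((i + a - 2).choose (a - 1) : ℤ) * ((m + a).choose (i + a - 1) : ℤ)
      = (∑ l ∈ Finset.Icc 1 (a - 1), (-1 : ℤ) ^ (l + 1) * ((m + 1).choose l : ℤ)
          * (((i + (a - l) - 2).choose ((a - l) - 1) : ℤ)
              * (((m + (a - l)).choose (i + (a - l) - 1) : ℕ) : ℤ)))
        + (-1 : ℤ) ^ (a - 1) * ((m + 1).choose (i + a - 1) : ℤ) := by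
  set u : ℤ → ℤ := fun t => ibin (t + ((i : ℤ) - 2)) (i - 1) with hu
  set v : ℤ → ℤ := fun t => ibin (t + (m : ℤ)) (m + 1 - i) with hv
  -- the m+1-st forward difference of u * v vanishes
  have hF_diff : (fwdDiff (1 : ℤ))^[m + 1] (u * v) = 0 := by
    have h := fwdDiff_iter_mul_eq_zero m (i - 1) (m + 1 - i) u v (by omega)
      (fwdDiff_iter_ibin _ _) (fwdDiff_iter_ibin _ _)
    exact h
  -- the basic alternating-sum identity
  have hs := sum_alt m (u * v) hF_diff (a : ℤ)
  rw [Finset.range_eq_Ico] at hs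
  rw [← Finset.sum_Ico_consecutive _ (show 0 ≤ 1 by omega) (show 1 ≤ m + 2 by omega)] at hs
  rw [show Finset.Ico 0 1 = {0} from Nat.Ico_succ_singleton 0, Finset.sum_singleton] at hs
  simp only [pow_zero, Nat.choose_zero_right, Nat.cast_one, one_mul, Nat.cast_zero,
    sub_zero, Nat.cast_ofNat] at hs
  -- E : (u*v) a = ∑_{l ∈ Ico 1 (m+2)} (-1)^(l+1) * C(m+1,l) * (u*v)(a-l)
  have E : (u * v) (a : ℤ) = ∑ l ∈ Finset.Ico 1 (m + 2),
      (-1 : ℤ) ^ (l + 1) * ((m + 1).choose l : ℤ) * (u * v) ((a : ℤ) - l) := by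
    have step : ∀ l ∈ Finset.Ico 1 (m + 2),
        (-1 : ℤ) ^ (l + 1) * ((m + 1).choose l : ℤ) * (u * v) ((a : ℤ) - l)
          = -((-1 : ℤ) ^ l * ((m + 1).choose l : ℤ) * (u * v) ((a : ℤ) - l)) := by
      intro l _
      rw [pow_succ]
      ring
    rw [Finset.sum_congr rfl step, Finset.sum_neg_distrib]
    linarith [hs]
  -- value of (u*v) at a
  have hval_a : (u * v) (a : ℤ)
      = ((i + a - 2).choose (a - 1) : ℤ) * ((m + a).choose (i + a - 1) : ℤ) := by
    rw [Pi.mul_apply]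
    exact F_nat m i a hi1 hi2 (by omega)
  -- values at positive points
  have hval_pos : ∀ l, 1 ≤ l → l ≤ a - 1 →
      (u * v) ((a : ℤ) - l) = ((i + (a - l) - 2).choose ((a - l) - 1) : ℤ)
        * (((m + (a - l)).choose (i + (a - l) - 1) : ℕ) : ℤ) := by
    intro l hl1 hl2
    have e : (a : ℤ) - l = (((a - l : ℕ)) : ℤ) := by omega
    rw [e, Pi.mul_apply]
    exact F_nat m i (a - l) hi1 hi2 (by omega)
  -- now split on the size of a
  rcases le_or_gt (m + 2) a with hbig | hsmall
  · -- a ≥ m+2 : the tail term vanishes and Icc 1 (a-1) ⊇ Ico 1 (m+2)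
    rw [Nat.choose_eq_zero_of_lt (show m + 1 < i + a - 1 by omega)]
    rw [show ((0 : ℕ) : ℤ) = 0 from rfl, mul_zero, add_zero]
    rw [show Finset.Icc 1 (a - 1) = Finset.Ico 1 a by rw [← Finset.Ico_add_one_right_eq_Icc]; congr 1; omega]
    rw [← Finset.sum_subset (Finset.Ico_subset_Ico le_rfl (show m + 2 ≤ a by omega))
      (by
        intro l hl hl2
        rw [Finset.mem_Ico] at hl hl2
        rw [Nat.choose_eq_zero_of_lt (show m + 1 < l by omega)]
        push_cast
        ring)]
    rw [hval_a.symm, E]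
    apply Finset.sum_congr rfl
    intro l hl
    rw [Finset.mem_Ico] at hl
    rw [hval_pos l (by omega) (by omega)]
  · -- a ≤ m+1 : split the sum into Ico 1 a and Ico a (m+2)
    rw [← Finset.sum_Ico_consecutive _ (show 1 ≤ a by omega) (show a ≤ m + 2 by omega)] at E
    have htail : ∑ l ∈ Finset.Ico a (m + 2),
        (-1 : ℤ) ^ (l + 1) * ((m + 1).choose l : ℤ) * (u * v) ((a : ℤ) - l)
          = (-1 : ℤ) ^ (a - 1) * ((m + 1).choose (i + a - 1) : ℤ) := by
      have hterm : ∀ l ∈ Finset.Ico a (m + 2),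
          (-1 : ℤ) ^ (l + 1) * ((m + 1).choose l : ℤ) * (u * v) ((a : ℤ) - l)
            = if l = i + a - 1 then (-1 : ℤ) ^ (a - 1) * ((m + 1).choose (i + a - 1) : ℤ)
              else 0 := by
        intro l hl
        rw [Finset.mem_Ico] at hl
        have e : (a : ℤ) - l = -(((l - a : ℕ)) : ℤ) := by omega
        rw [e, Pi.mul_apply]
        rw [F_neg m i (l - a) hi1 hi2 (by omega)]
        by_cases hli : l = i + a - 1
        · rw [if_pos hli]
          subst hli
          rw [show i + a - 1 - a = i - 1 by omega, Nat.choose_self,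
            show m - (i - 1) = m + 1 - i by omega, Nat.choose_self]
          push_cast
          rw [show ((-1 : ℤ) ^ (i + a - 1 + 1) * ↑((m + 1).choose (i + a - 1)) *
            ((-1) ^ (i - 1) * 1 * 1)) = ((-1 : ℤ) ^ (i + a - 1 + 1) * (-1) ^ (i - 1)) *
              ↑((m + 1).choose (i + a - 1)) by ring, sign_helper i a hi1 (by omega)]
        · rw [if_neg hli]
          rcases lt_or_gt_of_ne hli with hlt | hgt
          · rw [Nat.choose_eq_zero_of_lt (show l - a < i - 1 by omega)]
            push_cast
            ring
          · rw [Nat.choose_eq_zero_of_lt (show m - (l - a) < m + 1 - i by omega)]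
            push_cast
            ring
      rw [Finset.sum_congr rfl hterm, Finset.sum_ite_eq' (Finset.Ico a (m + 2)) (i + a - 1)]
      by_cases hmem : i + a - 1 ∈ Finset.Ico a (m + 2)
      · rw [if_pos hmem]
      · rw [if_neg hmem]
        rw [Finset.mem_Ico] at hmem
        rw [Nat.choose_eq_zero_of_lt (show m + 1 < i + a - 1 by omega)]
        push_cast
        ring
    rw [show Finset.Icc 1 (a - 1) = Finset.Ico 1 a by rw [← Finset.Ico_add_one_right_eq_Icc]; congr 1; omega]
    rw [← hval_a, E, htail]
    congr 1
    apply Finset.sum_congr rfl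
    intro l hl
    rw [Finset.mem_Ico] at hl
    rw [hval_pos l (by omega) (by omega)]
/-- If β satisfies the given recursion, then
    β(a,i) = C(i+a-2, a-1) · C(m+a, i+a-1). -/
theorem stmt_0 (m : ℕ) (β : ℕ → ℕ → ℤ)
    (h1 : ∀ i, 1 ≤ i → i ≤ m + 1 → β 1 i = ((m + 1).choose i : ℤ))
    (h2 : ∀ a i, 2 ≤ a → 1 ≤ i → i ≤ m + 1 →
      β a i = (∑ l ∈ Finset.Icc 1 (a - 1),
          (-1 : ℤ) ^ (l + 1) * ((m + 1).choose l : ℤ) * β (a - l) i)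
        + (-1 : ℤ) ^ (a - 1) * ((m + 1).choose (i + a - 1) : ℤ)) :
    ∀ a i, 1 ≤ a → 1 ≤ i → i ≤ m + 1 →
      β a i = ((i + a - 2).choose (a - 1) : ℤ) * ((m + a).choose (i + a - 1) : ℤ) := by
  intro a
  induction a using Nat.strong_induction_on with
  | _ a ih =>
    intro i ha hi1 hi2
    rcases eq_or_lt_of_le ha with h1a | h2a
    · rw [← h1a, h1 i hi1 hi2, show (1 : ℕ) - 1 = 0 from rfl, Nat.choose_zero_right,
        show i + 1 - 1 = i by omega]
      push_cast
      ring
    · have ha2 : 2 ≤ a := h2a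
      rw [h2 a i ha2 hi1 hi2]
      have hsum : ∀ l ∈ Finset.Icc 1 (a - 1),
          (-1 : ℤ) ^ (l + 1) * ((m + 1).choose l : ℤ) * β (a - l) i
            = (-1 : ℤ) ^ (l + 1) * ((m + 1).choose l : ℤ)
                * (((i + (a - l) - 2).choose ((a - l) - 1) : ℤ)
                    * (((m + (a - l)).choose (i + (a - l) - 1) : ℕ) : ℤ)) := by
        intro l hl
        rw [Finset.mem_Icc] at hl
        rw [ih (a - l) (by omega) i (by omega) hi1 hi2]
      rw [Finset.sum_congr rfl hsum]
      exact (g_rec m i a hi1 hi2 ha2).symm
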